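/- Let p_1,...,p_n ∈ [0,1], f the Bernoulli sum mass function with these parameters and f^{(i)} the leave-one-out mass functions. Define for k with f_k > 0: α_k = (Σ_i p_i'·p_i·f_{k-1}^{(i)})/((Σ_i p_i')·f_k) for nonnegative weights p_i' not all zero. If all p_i' ≥ 0 and f_k, f_{k+1} > 0, then α_{k+1} ≥ α_k. -/

import Mathlib

open Finset

/-- Probability mass function of a sum of independent Bernoulli random variables
indexed by the finite set `I`, with parameters `p i`. -/
def bernoulliSumPMF (I : Finset ℕ) (p : ℕ → ℝ) (k : ℤ) : ℝ :=
  if 0 ≤ k then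
    ∑ S ∈ I.powersetCard k.toNat, (∏ i ∈ S, p i) * (∏ i ∈ I \ S, (1 - p i))
  else 0

namespace SO

lemma neg {I : Finset ℕ} {p : ℕ → ℝ} {k : ℤ} (hk : k < 0) : bernoulliSumPMF I p k = 0 := by
  simp [bernoulliSumPMF, not_le.mpr hk]

lemma big {I : Finset ℕ} {p : ℕ → ℝ} {k : ℤ} (hk : (I.card : ℤ) < k) :
    bernoulliSumPMF I p k = 0 := by
  have h0 : (0:ℤ) ≤ k := le_trans (Int.ofNat_nonneg _) hk.le
  have : I.card < k.toNat := by omega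
  simp [bernoulliSumPMF, h0, Finset.powersetCard_eq_empty.mpr this]

lemma nonneg {I : Finset ℕ} {p : ℕ → ℝ} (hp : ∀ i ∈ I, 0 ≤ p i ∧ p i ≤ 1) (k : ℤ) :
    0 ≤ bernoulliSumPMF I p k := by
  unfold bernoulliSumPMF
  split
  · apply Finset.sum_nonneg
    intro S hS
    rw [Finset.mem_powersetCard] at hS
    apply mul_nonneg
    · exact Finset.prod_nonneg fun i hi => (hp i (hS.1 hi)).1
    · exact Finset.prod_nonneg fun i hi => by
        have := (hp i (Finset.mem_sdiff.mp hi).1).2; linarith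
  · exact le_refl _

lemma pos {I : Finset ℕ} {p : ℕ → ℝ} (hp : ∀ i ∈ I, 0 < p i ∧ p i < 1) {k : ℤ}
    (h0 : 0 ≤ k) (h1 : k ≤ I.card) : 0 < bernoulliSumPMF I p k := by
  unfold bernoulliSumPMF
  rw [if_pos h0]
  have hcard : k.toNat ≤ I.card := by omega
  obtain ⟨T, hTI, hT⟩ := Finset.exists_subset_card_eq hcard
  apply Finset.sum_pos'
  · intro S hS
    rw [Finset.mem_powersetCard] at hS
    apply mul_nonneg
    · exact Finset.prod_nonneg fun i hi => (hp i (hS.1 hi)).1.le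
    · exact Finset.prod_nonneg fun i hi => by
        have := (hp i (Finset.mem_sdiff.mp hi).1).2; linarith
  · refine ⟨T, Finset.mem_powersetCard.mpr ⟨hTI, hT⟩, ?_⟩
    apply mul_pos
    · exact Finset.prod_pos fun i hi => (hp i (hTI hi)).1
    · exact Finset.prod_pos fun i hi => by
        have := (hp i (Finset.mem_sdiff.mp hi).1).2; linarith

lemma rec_insert {J : Finset ℕ} {i : ℕ} (hi : i ∉ J) (p : ℕ → ℝ) (k : ℤ) :
    bernoulliSumPMF (insert i J) p k =
      (1 - p i) * bernoulliSumPMF J p k + p i * bernoulliSumPMF J p (k - 1) := by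
  rcases lt_trichotomy k 0 with hk | hk | hk
  · rw [neg hk, neg hk, neg (by omega : k - 1 < 0)]; ring
  · subst hk
    rw [neg (by omega : (0:ℤ) - 1 < 0)]
    unfold bernoulliSumPMF
    simp only [le_refl, if_pos, Int.toNat_zero, Finset.powersetCard_zero,
      Finset.sum_singleton, Finset.prod_empty, Finset.sdiff_empty, one_mul]
    rw [Finset.prod_insert hi]
    ring
  · have h0 : (0:ℤ) ≤ k := hk.le
    have h1 : (0:ℤ) ≤ k - 1 := by omega
    unfold bernoulliSumPMF
    rw [if_pos h0, if_pos h0, if_pos h1]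
    have hm : k.toNat = (k-1).toNat + 1 := by omega
    rw [hm]
    rw [Finset.powersetCard_succ_insert hi]
    rw [Finset.sum_union]
    · congr 1
      · rw [Finset.mul_sum]
        apply Finset.sum_congr rfl
        intro S hS
        rw [Finset.mem_powersetCard] at hS
        have hiS : i ∉ S := fun h => hi (hS.1 h)
        have : insert i J \ S = insert i (J \ S) := by
          ext x
          simp only [Finset.mem_sdiff, Finset.mem_insert, not_or]
          constructor
          · rintro ⟨h1 | h1, h2⟩
            · exact Or.inl h1
            · exact Or.inr ⟨h1, h2⟩
          · rintro (rfl | ⟨h1, h2⟩)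
            · exact ⟨Or.inl rfl, hiS⟩
            · exact ⟨Or.inr h1, h2⟩
        rw [this, Finset.prod_insert (by simp only [Finset.mem_sdiff]; exact fun h => hi h.1)]
        ring
      · rw [Finset.sum_image (fun x hx y hy hxy => by
          rw [Finset.mem_coe, Finset.mem_powersetCard] at hx hy
          have : x = (insert i x).erase i := by
            rw [Finset.erase_insert (fun h => hi (hx.1 h))]
          rw [this, hxy, Finset.erase_insert (fun h => hi (hy.1 h))])]
        rw [Finset.mul_sum]
        apply Finset.sum_congr rfl
        intro T hT
        rw [Finset.mem_powersetCard] at hT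
        have hiT : i ∉ T := fun h => hi (hT.1 h)
        have h1 : insert i J \ insert i T = J \ T := by
          ext x
          simp only [Finset.mem_sdiff, Finset.mem_insert, not_or]
          constructor
          · rintro ⟨h1 | h1, h2, h3⟩
            · exact absurd h1 (by rintro rfl; exact h2 rfl)
            · exact ⟨h1, h3⟩
          · rintro ⟨h1, h2⟩
            exact ⟨Or.inr h1, fun h => absurd (h ▸ h1) hi, h2⟩
        rw [h1, Finset.prod_insert hiT]
        ring
    · rw [Finset.disjoint_right]
      intro S hS hS'
      rw [Finset.mem_image] at hS
      rw [Finset.mem_powersetCard] at hS'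
      obtain ⟨T, hT, rfl⟩ := hS
      exact hi (hS'.1 (Finset.mem_insert_self i T))

lemma rec_mem {I : Finset ℕ} {i : ℕ} (hi : i ∈ I) (p : ℕ → ℝ) (k : ℤ) :
    bernoulliSumPMF I p k =
      (1 - p i) * bernoulliSumPMF (I \ {i}) p k + p i * bernoulliSumPMF (I \ {i}) p (k - 1) := by
  have h1 : I = insert i (I \ {i}) := by
    rw [Finset.sdiff_singleton_eq_erase, Finset.insert_erase hi]
  have h2 : i ∉ I \ {i} := by simp
  conv_lhs => rw [h1]
  exact rec_insert h2 p k

lemma empty_eval (p : ℕ → ℝ) (k : ℤ) :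
    bernoulliSumPMF ∅ p k = if k = 0 then 1 else 0 := by
  rcases lt_trichotomy k 0 with hk | hk | hk
  · rw [neg hk, if_neg (by omega)]
  · subst hk; simp [bernoulliSumPMF]
  · rw [big (by simpa using hk), if_neg (by omega)]

lemma logconcave_strict (p : ℕ → ℝ) (I : Finset ℕ) (hp : ∀ i ∈ I, 0 < p i ∧ p i < 1) :
    ∀ k : ℤ, bernoulliSumPMF I p (k-1) * bernoulliSumPMF I p (k+1) ≤
      (bernoulliSumPMF I p k)^2 := by
  induction I using Finset.induction_on with
  | empty =>
    intro k
    simp only [empty_eval]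
    split_ifs <;> norm_num <;> omega
  | @insert _ _ hi =>
    rename_i i s IH
    have hps : ∀ j ∈ s, 0 < p j ∧ p j < 1 := fun j hj => hp j (Finset.mem_insert_of_mem hj)
    have hpi := hp i (Finset.mem_insert_self i s)
    have IH' := IH hps
    intro k
    set g : ℤ → ℝ := bernoulliSumPMF s p with hg
    have hrec : ∀ m : ℤ, bernoulliSumPMF (insert i s) p m = (1 - p i) * g m + p i * g (m - 1) :=
      fun m => rec_insert hi p m
    have hgnn : ∀ m : ℤ, 0 ≤ g m := nonneg (fun j hj => ⟨(hps j hj).1.le, (hps j hj).2.le⟩)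
    have hzero : ∀ m : ℤ, g m = 0 → m < 0 ∨ (s.card : ℤ) < m := by
      intro m hm
      by_contra h
      push_neg at h
      exact absurd hm (ne_of_gt (pos hps h.1 h.2))
    -- the four-term inequality
    have hC : g (k-2) * g (k+1) ≤ g (k-1) * g k := by
      rcases eq_or_lt_of_le (mul_nonneg (hgnn (k-1)) (hgnn k)) with h | h
      · -- g (k-1) * g k = 0
        have h0 : g (k-1) = 0 ∨ g k = 0 := mul_eq_zero.mp h.symm
        have : g (k-2) * g (k+1) = 0 := by
          rcases h0 with h0 | h0 <;> rcases hzero _ h0 with h1 | h1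
          · rw [show g (k-2) = 0 from neg (by omega), zero_mul]
          · rw [show g (k+1) = 0 from big (by omega), mul_zero]
          · rw [show g (k-2) = 0 from neg (by omega), zero_mul]
          · rw [show g (k+1) = 0 from big (by omega), mul_zero]
        rw [this, ← h]
      · have h1 : g (k-2) * g k ≤ g (k-1) ^ 2 := by
          have := IH' (k-1)
          simpa [show k-1-1 = k-2 by ring, show k-1+1 = k by ring] using this
        have h2 : g (k-1) * g (k+1) ≤ g k ^ 2 := by
          simpa using IH' k
        have key : (g (k-2) * g k) * (g (k-1) * g (k+1)) ≤ g (k-1)^2 * g k^2 :=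
          mul_le_mul h1 h2 (mul_nonneg (hgnn (k-1)) (hgnn (k+1))) (sq_nonneg _)
        exact le_of_mul_le_mul_right (by nlinarith [key]) h
    have hAk : g (k-1) * g (k+1) ≤ g k ^ 2 := by simpa using IH' k
    have hAk1 : g (k-2) * g k ≤ g (k-1) ^ 2 := by
      have := IH' (k-1)
      simpa [show k-1-1 = k-2 by ring, show k-1+1 = k by ring] using this
    rw [hrec (k-1), hrec (k+1), hrec k]
    have e1 : k - 1 - 1 = k - 2 := by ring
    have e2 : k + 1 - 1 = k := by ring
    rw [e1, e2]
    have hq : (0:ℝ) ≤ 1 - p i := by linarith [hpi.2]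
    have hpp : (0:ℝ) ≤ p i := hpi.1.le
    nlinarith [mul_le_mul_of_nonneg_left hAk (mul_nonneg hq hq),
      mul_le_mul_of_nonneg_left hAk1 (mul_nonneg hpp hpp),
      mul_le_mul_of_nonneg_left hC (mul_nonneg hq hpp)]


lemma cont (I : Finset ℕ) (p : ℕ → ℝ) (m : ℤ) :
    Continuous (fun t : ℝ => bernoulliSumPMF I (fun i => (1-t) * p i + t * (1/2)) m) := by
  unfold bernoulliSumPMF
  by_cases hm : (0:ℤ) ≤ m
  · simp only [if_pos hm]
    apply continuous_finset_sum
    intro S _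
    exact Continuous.mul
      (continuous_finset_prod _ fun i _ => by continuity)
      (continuous_finset_prod _ fun i _ => by continuity)
  · simp only [if_neg hm]
    exact continuous_const

lemma logconcave (I : Finset ℕ) (p : ℕ → ℝ) (hp : ∀ i ∈ I, 0 ≤ p i ∧ p i ≤ 1) (k : ℤ) :
    bernoulliSumPMF I p (k-1) * bernoulliSumPMF I p (k+1) ≤ (bernoulliSumPMF I p k)^2 := by
  set F : ℝ → ℝ := fun t =>
    (bernoulliSumPMF I (fun i => (1-t) * p i + t * (1/2)) k)^2 -
      bernoulliSumPMF I (fun i => (1-t) * p i + t * (1/2)) (k-1) *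
        bernoulliSumPMF I (fun i => (1-t) * p i + t * (1/2)) (k+1) with hF
  have hFc : Continuous F := by
    apply Continuous.sub
    · exact (cont I p k).pow 2
    · exact (cont I p (k-1)).mul (cont I p (k+1))
  have hFpos : ∀ t ∈ Set.Ioc (0:ℝ) 1, 0 ≤ F t := by
    intro t ht
    have hstrict : ∀ i ∈ I, 0 < (1-t) * p i + t * (1/2) ∧ (1-t) * p i + t * (1/2) < 1 := by
      intro i hi
      obtain ⟨h1, h2⟩ := hp i hi
      obtain ⟨ht1, ht2⟩ := ht
      constructor
      · nlinarith
      · nlinarith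
    have := logconcave_strict _ I hstrict k
    simp only [hF]
    linarith [this]
  have h0 : 0 ≤ F 0 := by
    have htend : Filter.Tendsto F (nhdsWithin 0 (Set.Ioi (0:ℝ))) (nhds (F 0)) :=
      hFc.continuousAt.continuousWithinAt
    refine ge_of_tendsto htend ?_
    filter_upwards [Ioc_mem_nhdsGT_of_mem (Set.mem_Ico.mpr ⟨le_refl (0:ℝ), one_pos⟩)] with t ht
    exact hFpos t ht
  have hpe : (fun i => (1-(0:ℝ)) * p i + 0 * (1/2)) = p := by funext i; ring
  simp only [hF, hpe] at h0
  linarith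
end SO

theorem shepp_olkin_alpha_monotone (n : ℕ) (p p' : ℕ → ℝ)
    (hp : ∀ i ∈ Finset.range n, 0 ≤ p i ∧ p i ≤ 1)
    (hp' : ∀ i ∈ Finset.range n, 0 ≤ p' i)
    (hp'sum : 0 < ∑ i ∈ Finset.range n, p' i)
    (f : ℤ → ℝ) (hf : ∀ k, f k = bernoulliSumPMF (Finset.range n) p k)
    (f' : ℕ → ℤ → ℝ)
    (hf' : ∀ i ∈ Finset.range n, ∀ k, f' i k = bernoulliSumPMF (Finset.range n \ {i}) p k)
    (α : ℤ → ℝ)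
    (hα : ∀ k, α k = (∑ i ∈ Finset.range n, p' i * p i * f' i (k - 1)) /
      ((∑ i ∈ Finset.range n, p' i) * f k))
    (k : ℤ) (hfk : 0 < f k) (hfk1 : 0 < f (k + 1)) :
    α k ≤ α (k + 1) := by
  have hS : 0 < ∑ i ∈ Finset.range n, p' i := hp'sum
  have hfk' : 0 < (∑ i ∈ Finset.range n, p' i) * f k := mul_pos hS hfk
  have hfk1' : 0 < (∑ i ∈ Finset.range n, p' i) * f (k + 1) := mul_pos hS hfk1
  rw [hα k, hα (k + 1), div_le_div_iff₀ hfk' hfk1']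
  have key : (∑ i ∈ Finset.range n, p' i * p i * f' i (k - 1)) * f (k + 1) ≤
      (∑ i ∈ Finset.range n, p' i * p i * f' i (k + 1 - 1)) * f k := by
    rw [Finset.sum_mul, Finset.sum_mul]
    apply Finset.sum_le_sum
    intro i hi
    have e : k + 1 - 1 = k := by ring
    rw [e]
    have hrec : ∀ m : ℤ, f m = (1 - p i) * f' i m + p i * f' i (m - 1) := by
      intro m
      rw [hf m, hf' i hi m, hf' i hi (m - 1)]
      exact SO.rec_mem hi p m
    have hlc : f' i (k - 1) * f' i (k + 1) ≤ (f' i k) ^ 2 := by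
      rw [hf' i hi (k - 1), hf' i hi (k + 1), hf' i hi k]
      exact SO.logconcave _ p (fun j hj => hp j (Finset.mem_sdiff.mp hj).1) k
    have h1 : f (k + 1) = (1 - p i) * f' i (k + 1) + p i * f' i k := by
      rw [hrec (k + 1), e]
    have h2 : f k = (1 - p i) * f' i k + p i * f' i (k - 1) := hrec k
    have hnn : 0 ≤ p' i * p i := mul_nonneg (hp' i hi) (hp i hi).1
    have hq : (0:ℝ) ≤ 1 - p i := by linarith [(hp i hi).2]
    rw [h1, h2]
    nlinarith [mul_le_mul_of_nonneg_left hlc (mul_nonneg hnn hq)]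
  calc (∑ i ∈ Finset.range n, p' i * p i * f' i (k - 1)) * ((∑ i ∈ Finset.range n, p' i) * f (k + 1))
      = (∑ i ∈ Finset.range n, p' i) * ((∑ i ∈ Finset.range n, p' i * p i * f' i (k - 1)) * f (k + 1)) := by ring
    _ ≤ (∑ i ∈ Finset.range n, p' i) * ((∑ i ∈ Finset.range n, p' i * p i * f' i (k + 1 - 1)) * f k) :=
        mul_le_mul_of_nonneg_left key hS.le
    _ = (∑ i ∈ Finset.range n, p' i * p i * f' i (k + 1 - 1)) * ((∑ i ∈ Finset.range n, p' i) * f k) := by ring
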